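/- If X is a nonempty finite-dimensional Noetherian topological space in which every maximal chain of irreducible closed subsets has the same length, then every minimal irreducible closed subset of X has codimension in X equal to dim X. -/

import Mathlib

open Order TopologicalSpace

/-- A maximal chain of irreducible closed subsets. -/
def IsMaximalChain {α : Type*} [PartialOrder α] (p : LTSeries α) : Prop :=
  IsMin p.head ∧ IsMax p.last ∧ ∀ i : Fin p.length, p.toFun i.castSucc ⋖ p.toFun i.succ

lemma aux_head_insertNth {α : Type*} [PartialOrder α] (p : LTSeries α) (i : Fin p.length)
    (a : α) (h1 : p i.castSucc < a) (h2 : a < p i.succ) :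
    (p.insertNth i a h1 h2).head = p.head := by
  have h0 : (0 : Fin (p.length + 2)) < Fin.castSucc i.succ := by
    simp [Fin.lt_def]
  simp only [RelSeries.head, RelSeries.insertNth]
  change Fin.insertNth _ _ _ (0 : Fin (p.length + 2)) = _
  rw [Fin.insertNth_apply_below h0]
  simp only [eq_rec_constant]
  rfl

lemma aux_maximal {α : Type*} [PartialOrder α] (p : LTSeries α) (hmin : IsMin p.head)
    (hmax : ∀ q : LTSeries α, q.head = p.head → q.length ≤ p.length) : IsMaximalChain p := by
  refine ⟨hmin, ?_, ?_⟩
  · by_contra h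
    obtain ⟨b, hb⟩ := not_isMax_iff.mp h
    have := hmax (p.snoc b hb) (by simp)
    simp [RelSeries.snoc, RelSeries.append] at this
  · intro i
    have hlt := p.step i
    by_contra h
    obtain ⟨c, h1, h2⟩ := (not_covBy_iff hlt).mp h
    have := hmax (p.insertNth i c h1 h2) (aux_head_insertNth p i c h1 h2)
    simp [RelSeries.insertNth] at this

/-- If `X` is a nonempty finite-dimensional Noetherian topological space in which every maximal
chain of irreducible closed subsets has the same length, then every minimal irreducible closed
subset `Y` of `X` has codimension in `X` equal to `dim X`.  The codimension of `Y` in `X` is the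
supremum of lengths of chains of irreducible closed subsets starting at `Y`, i.e. the Krull
dimension of the interval `[Y, ∞)`. -/
theorem stmt_1 (X : Type*) [TopologicalSpace X] [NoetherianSpace X] [Nonempty X]
    (hfd : topologicalKrullDim X < ⊤)
    (hbieq : ∀ p q : LTSeries (IrreducibleCloseds X),
      IsMaximalChain p → IsMaximalChain q → p.length = q.length) :
    ∀ Y : IrreducibleCloseds X, IsMin Y →
      Order.krullDim (Set.Ici Y) = topologicalKrullDim X := by
  intro Y hY
  let A := IrreducibleCloseds X
  haveI hne : Nonempty A := ⟨Y⟩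
  have hdim : topologicalKrullDim X = Order.krullDim A := rfl
  -- get a natural number bound on lengths of LTSeries
  have hfd' : Order.krullDim A < ⊤ := hfd
  obtain ⟨d, hd⟩ : ∃ d : ℕ∞, Order.krullDim A = d := by
    cases h : Order.krullDim A with
    | bot =>
      exfalso
      have := Order.krullDim_nonneg (α := A)
      rw [h] at this
      exact absurd this (by simp)
    | coe d => exact ⟨d, rfl⟩
  have hdtop : d ≠ ⊤ := by
    rintro rfl
    rw [hd] at hfd'
    simp at hfd'
  obtain ⟨N, rfl⟩ : ∃ N : ℕ, d = (N : ℕ∞) := ⟨d.toNat, (ENat.coe_toNat hdtop).symm⟩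
  have hbound : ∀ p : LTSeries A, p.length ≤ N := by
    intro p
    have := Order.LTSeries.length_le_krullDim p
    rw [hd] at this
    exact_mod_cast this
  -- the poset A is finite dimensional
  haveI : FiniteDimensionalOrder A := by
    constructor
    have hSne : (Set.range fun p : LTSeries A => p.length).Nonempty :=
      ⟨(RelSeries.singleton _ Y).length, ⟨RelSeries.singleton _ Y, rfl⟩⟩
    have hSbd : BddAbove (Set.range fun p : LTSeries A => p.length) :=
      ⟨N, by rintro _ ⟨p, rfl⟩; exact hbound p⟩
    obtain ⟨p, hp⟩ := Nat.sSup_mem hSne hSbd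
    refine ⟨p, fun q => ?_⟩
    have h1 : q.length ≤ sSup (Set.range fun p : LTSeries A => p.length) :=
      le_csSup hSbd ⟨q, rfl⟩
    simpa [hp] using h1
  set n := (LTSeries.longestOf A).length with hn
  have hkr : Order.krullDim A = (n : ℕ∞) := Order.krullDim_eq_length_of_finiteDimensionalOrder
  -- the longest chain is a maximal chain
  have hPmax : IsMaximalChain (LTSeries.longestOf A) := by
    apply aux_maximal _ _ (fun q _ => LTSeries.longestOf_is_longest q)
    by_contra h
    obtain ⟨b, hb⟩ := not_isMin_iff.mp h
    have := LTSeries.longestOf_is_longest ((LTSeries.longestOf A).cons b hb)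
    simp [RelSeries.cons, RelSeries.append] at this
  -- a longest chain starting at Y
  set T : Set ℕ := {m | ∃ p : LTSeries A, p.head = Y ∧ p.length = m} with hT
  have hTne : T.Nonempty := ⟨0, RelSeries.singleton _ Y, rfl, rfl⟩
  have hTbd : BddAbove T := ⟨N, by rintro _ ⟨p, _, rfl⟩; exact hbound p⟩
  obtain ⟨p, hphead, hplen⟩ := Nat.sSup_mem hTne hTbd
  have hpmax : ∀ q : LTSeries A, q.head = p.head → q.length ≤ p.length := by
    intro q hq
    rw [hplen]
    exact le_csSup hTbd ⟨q, hphead ▸ hq, rfl⟩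
  have hpisM : IsMaximalChain p := aux_maximal p (hphead ▸ hY) hpmax
  have hpn : p.length = n := hbieq p (LTSeries.longestOf A) hpisM hPmax
  -- construct corresponding chain in Ici Y
  have hmem : ∀ i, p.toFun i ∈ Set.Ici Y := by
    intro i
    have : p.head ≤ p.toFun i := p.monotone (Fin.zero_le i)
    rwa [hphead] at this
  let q : LTSeries (Set.Ici Y) :=
    ⟨p.length, fun i => ⟨p.toFun i, hmem i⟩, fun i => p.step i⟩
  have hge : (n : WithBot ℕ∞) ≤ Order.krullDim (Set.Ici Y) := by
    have := Order.LTSeries.length_le_krullDim q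
    have hq : q.length = n := hpn
    rwa [hq] at this
  have hle : Order.krullDim (Set.Ici Y) ≤ Order.krullDim A :=
    Order.krullDim_le_of_strictMono (Subtype.val) (fun a b h => h)
  rw [hdim, hkr]
  exact le_antisymm (hkr ▸ hle) hge
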